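/- The cycle C_n is a minimal DPDP-graph if and only if n ∈ {3, 6, 9}. -/

import Mathlib

open SimpleGraph
open Fin.CommRing

variable {V : Type*}

/-- `D` is a dominating set of `G`. -/
def Dominating (G : SimpleGraph V) (D : Set V) : Prop :=
  ∀ v ∉ D, ∃ u ∈ D, G.Adj v u

/-- `P` is a paired-dominating set of `G`: it is dominating and the induced
subgraph `G[P]` contains a perfect matching (given by an involutive pairing of
the vertices of `P` along edges inside `P`). -/
def PairedDominating (G : SimpleGraph V) (P : Set V) : Prop :=
  Dominating G P ∧ ∃ m : V → V, ∀ v ∈ P, m v ∈ P ∧ G.Adj v (m v) ∧ m (m v) = v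

/-- `(D, P)` is a DP-pair: a partition of the vertex set into a dominating set `D`
and a paired-dominating set `P`. -/
def IsDPPair (G : SimpleGraph V) (D P : Set V) : Prop :=
  Disjoint D P ∧ D ∪ P = Set.univ ∧ Dominating G D ∧ PairedDominating G P

/-- `G` is a DPDP-graph: its vertex set partitions into a dominating set and a
paired-dominating set. -/
def IsDPDP (G : SimpleGraph V) : Prop := ∃ D P, IsDPPair G D P

/-- A minimal DPDP-graph: a DPDP-graph no proper spanning subgraph of which is DPDP. -/
def IsMinimalDPDP (G : SimpleGraph V) : Prop :=
  IsDPDP G ∧ ∀ G' : SimpleGraph V, G' < G → ¬ IsDPDP G'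

/-- A leaf is a vertex of degree 1. -/
def IsLeaf (G : SimpleGraph V) (v : V) : Prop := (G.neighborSet v).ncard = 1

/-- A support vertex is a vertex adjacent to at least one leaf. -/
def IsSupport (G : SimpleGraph V) (v : V) : Prop := ∃ u, G.Adj v u ∧ IsLeaf G u

-- monotonicity
theorem isDPDP_mono {G H : SimpleGraph V} (h : G ≤ H) : IsDPDP G → IsDPDP H := by
  rintro ⟨D, P, h1, h2, h3, h4, m, hm⟩
  exact ⟨D, P, h1, h2,
    fun v hv => (h3 v hv).imp (fun u hu => ⟨hu.1, h (hu.2)⟩),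
    fun v hv => (h4 v hv).imp (fun u hu => ⟨hu.1, h (hu.2)⟩),
    m, fun v hv => ⟨(hm v hv).1, h (hm v hv).2.1, (hm v hv).2.2⟩⟩

-- transport along an adjacency-preserving equiv
theorem isDPDP_map {G : SimpleGraph V} {G' : SimpleGraph W} (e : V ≃ W)
    (h : ∀ a b, G.Adj a b ↔ G'.Adj (e a) (e b)) : IsDPDP G → IsDPDP G' := by
  rintro ⟨D, P, h1, h2, h3, h4, m, hm⟩
  refine ⟨e '' D, e '' P, ?_, ?_, ?_, ?_, fun w => e (m (e.symm w)), ?_⟩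
  · exact (Set.disjoint_image_iff e.injective).2 h1
  · rw [← Set.image_union, h2, Set.image_univ, e.surjective.range_eq]
  · intro w hw
    obtain ⟨u, hu, ha⟩ := h3 (e.symm w) (fun hc => hw ⟨e.symm w, hc, e.apply_symm_apply w⟩)
    exact ⟨e u, ⟨u, hu, rfl⟩, by simpa [h u (e.symm w), adj_comm] using ha⟩
  · intro w hw
    obtain ⟨u, hu, ha⟩ := h4 (e.symm w) (fun hc => hw ⟨e.symm w, hc, e.apply_symm_apply w⟩)
    exact ⟨e u, ⟨u, hu, rfl⟩, by simpa [h u (e.symm w), adj_comm] using ha⟩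
  · rintro w ⟨v, hv, rfl⟩
    obtain ⟨q1, q2, q3⟩ := hm v hv
    refine ⟨⟨m v, by simpa using q1, by simp⟩, ?_, ?_⟩
    · rw [← h]; simpa using q2
    · simp [q3]

theorem cyc_adj {n : ℕ} {a b : Fin (n+3)} :
    (cycleGraph (n+3)).Adj a b ↔ b = a + 1 ∨ a = b + 1 := by
  have h1 : (1 : Fin (n+3)).val = 1 := rfl
  rw [cycleGraph_adj']
  rw [show ((a - b).val = 1 ↔ a - b = 1) from by rw [Fin.ext_iff, h1],
      show ((b - a).val = 1 ↔ b - a = 1) from by rw [Fin.ext_iff, h1],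
      sub_eq_iff_eq_add, sub_eq_iff_eq_add, add_comm (1:Fin _) b, add_comm (1:Fin _) a]
  exact or_comm
def FCond {n : ℕ} (G : SimpleGraph (Fin (n+3))) (f : Fin (n+3) → Fin 3) : Prop :=
  ∀ v : Fin (n+3),
    (f v = 0 → ∃ u, G.Adj v u ∧ f u ≠ 0) ∧
    (f v ≠ 0 → ∃ u, G.Adj v u ∧ f u = 0) ∧
    (f v = 1 → G.Adj v (v+1) ∧ f (v+1) = 2) ∧
    (f v = 2 → G.Adj v (v-1) ∧ f (v-1) = 1)

theorem decode {n : ℕ} {G : SimpleGraph (Fin (n+3))} {f : Fin (n+3) → Fin 3}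
    (h : FCond G f) : IsDPDP G := by
  classical
  refine ⟨{v | f v = 0}, {v | f v ≠ 0}, ?_, ?_, ?_, ?_,
    fun v => if f v = 1 then v + 1 else if f v = 2 then v - 1 else v, ?_⟩
  · exact Set.disjoint_left.2 fun v hv hv' => hv' hv
  · ext v; by_cases hv : f v = 0 <;> simp [hv]
  · intro v hv
    obtain ⟨u, hu, h0⟩ := (h v).2.1 hv
    exact ⟨u, h0, hu⟩
  · intro v hv
    simp only [Set.mem_setOf_eq, not_not] at hv
    obtain ⟨u, hu, h0⟩ := (h v).1 hv
    exact ⟨u, h0, hu⟩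
  · intro v hv
    simp only [Set.mem_setOf_eq] at hv
    have h3 : f v = 1 ∨ f v = 2 := by omega
    rcases h3 with h3 | h3
    · obtain ⟨ha, he⟩ := (h v).2.2.1 h3
      refine ⟨?_, ?_, ?_⟩
      · simp [h3, he]
      · simpa [h3] using ha
      · simp only [h3, if_pos]
        simp [he, show (2:Fin 3) ≠ 1 by decide, add_sub_cancel_right]
    · obtain ⟨ha, he⟩ := (h v).2.2.2 h3
      refine ⟨?_, ?_, ?_⟩
      · simp [h3, he, show (2:Fin 3) ≠ 1 by decide]
      · simpa [h3, show (2:Fin 3) ≠ 1 by decide] using ha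
      · simp only [h3, show (2:Fin 3) ≠ 1 by decide, if_neg, if_pos]
        simp [he, sub_add_cancel]

theorem encode {n : ℕ} {H : SimpleGraph (Fin (n+3))} (hH : H ≤ cycleGraph (n+3))
    (h : IsDPDP H) : ∃ f : Fin (n+3) → Fin 3, FCond H f := by
  classical
  obtain ⟨D, P, h1, h2, h3, h4, m, hm⟩ := h
  have two_ne : (2 : Fin (n+3)) ≠ 0 := by
    simp [Fin.ext_iff, Fin.val_two]
    rw [Nat.mod_eq_of_lt (by omega)]; omega
  have memDP : ∀ v, v ∉ P → v ∈ D := by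
    intro v hv
    have hu : v ∈ D ∪ P := h2 ▸ Set.mem_univ v
    exact hu.resolve_right hv
  refine ⟨fun v => if v ∈ P then (if m v = v + 1 then 1 else 2) else 0, ?_⟩
  have hf0 : ∀ v, (if v ∈ P then (if m v = v + 1 then (1:Fin 3) else 2) else 0) = 0 ↔ v ∉ P := by
    intro v
    by_cases hv : v ∈ P <;> by_cases hm1 : m v = v + 1 <;> simp [hv, hm1]
  intro v
  refine ⟨?_, ?_, ?_, ?_⟩
  · intro hv
    rw [hf0] at hv
    obtain ⟨u, hu, ha⟩ := h4 v hv
    exact ⟨u, ha, by rw [Ne, hf0]; simp [hu]⟩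
  · intro hv
    rw [Ne, hf0, not_not] at hv
    have hvD : v ∉ D := Set.disjoint_right.1 h1 hv
    obtain ⟨u, hu, ha⟩ := h3 v hvD
    exact ⟨u, ha, by rw [hf0]; exact Set.disjoint_left.1 h1 hu⟩
  · intro hv
    by_cases hvP : v ∈ P
    · by_cases hm1 : m v = v + 1
      · obtain ⟨q1, q2, q3⟩ := hm v hvP
        rw [hm1] at q1 q2 q3
        refine ⟨q2, ?_⟩
        have : m (v+1) ≠ (v+1) + 1 := by
          rw [q3]
          intro hc
          exact two_ne (by linear_combination -hc)
        simp [q1, this]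
      · simp [hvP, hm1] at hv
    · simp [hvP] at hv
  · intro hv
    by_cases hvP : v ∈ P
    swap
    · simp [hvP] at hv
    · by_cases hm1 : m v = v + 1
      · simp [hvP, hm1] at hv
      · obtain ⟨q1, q2, q3⟩ := hm v hvP
        have hcyc := cyc_adj.1 (hH q2)
        have hmv : m v = v - 1 := by
          rcases hcyc with hc | hc
          · exact absurd hc hm1
          · exact eq_sub_of_add_eq hc.symm
        rw [hmv] at q1 q2 q3
        refine ⟨q2, ?_⟩
        have hq : m (v-1) = (v-1) + 1 := by rw [q3]; ring
        simp [q1, hq]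
def pathG (n : ℕ) : SimpleGraph (Fin (n+3)) := (cycleGraph (n+3)).deleteEdges {s(-1, 0)}

theorem two_ne' {n : ℕ} : (2 : Fin (n+3)) ≠ 0 := by
  simp [Fin.ext_iff, Fin.val_two]
  rw [Nat.mod_eq_of_lt (by omega)]; omega

theorem pathG_adj {n : ℕ} {a b : Fin (n+3)} :
    (pathG n).Adj a b ↔ (b = a + 1 ∧ a + 1 ≠ 0) ∨ (a = b + 1 ∧ b + 1 ≠ 0) := by
  rw [pathG, deleteEdges_adj, cyc_adj, Set.mem_singleton_iff, Sym2.eq_iff]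
  constructor
  · rintro ⟨hc | hc, hs⟩
    · refine Or.inl ⟨hc, fun h0 => hs ?_⟩
      exact Or.inl ⟨eq_neg_of_add_eq_zero_left h0, by rw [hc, h0]⟩
    · refine Or.inr ⟨hc, fun h0 => hs ?_⟩
      exact Or.inr ⟨by rw [hc, h0], eq_neg_of_add_eq_zero_left h0⟩
  · rintro (⟨hc, h0⟩ | ⟨hc, h0⟩)
    · refine ⟨Or.inl hc, ?_⟩
      rintro (⟨ha, hb⟩ | ⟨ha, hb⟩)
      · exact h0 (by rw [ha]; exact neg_add_cancel 1)
      · rw [ha, hb] at hc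
        exact two_ne' (n := n) (by linear_combination -hc)
    · refine ⟨Or.inr hc, ?_⟩
      rintro (⟨ha, hb⟩ | ⟨ha, hb⟩)
      · rw [ha, hb] at hc
        exact two_ne' (n := n) (by linear_combination -hc)
      · exact h0 (by rw [hb]; exact neg_add_cancel 1)

theorem pathG_le {n : ℕ} : pathG n ≤ cycleGraph (n+3) := deleteEdges_le _

theorem pathG_lt {n : ℕ} : pathG n < cycleGraph (n+3) := by
  refine lt_of_le_of_ne pathG_le (fun hc => ?_)
  have h1 : (cycleGraph (n+3)).Adj (-1) 0 := cyc_adj.2 (Or.inl (neg_add_cancel 1).symm)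
  have h2 : ¬ (pathG n).Adj (-1) 0 := by
    rw [pathG_adj]
    rintro (⟨_, h0⟩ | ⟨h0, _⟩)
    · exact h0 (neg_add_cancel 1)
    · exact two_ne' (n := n) (by linear_combination -h0)
  rw [hc] at h2
  exact h2 h1

theorem derivedPath {n : ℕ} {f : Fin (n+3) → Fin 3} (hf : FCond (pathG n) f) :
    ∀ v : Fin (n+3),
      (f v = 0 → (v + 1 ≠ 0 ∧ f (v+1) ≠ 0) ∨ (v ≠ 0 ∧ f (v-1) ≠ 0)) ∧
      (f v ≠ 0 → (v + 1 ≠ 0 ∧ f (v+1) = 0) ∨ (v ≠ 0 ∧ f (v-1) = 0)) ∧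
      (f v = 1 → v + 1 ≠ 0 ∧ f (v+1) = 2) ∧
      (f v = 2 → v ≠ 0 ∧ f (v-1) = 1) := by
  have conv : ∀ (v u : Fin (n+3)) (Q : Fin (n+3) → Prop), (pathG n).Adj v u → Q u →
      (v + 1 ≠ 0 ∧ Q (v+1)) ∨ (v ≠ 0 ∧ Q (v-1)) := by
    intro v u Q ha hq
    rcases pathG_adj.1 ha with ⟨hc, h0⟩ | ⟨hc, h0⟩
    · exact Or.inl ⟨h0, hc ▸ hq⟩
    · have hu : u = v - 1 := eq_sub_of_add_eq hc.symm
      exact Or.inr ⟨fun hv0 => h0 (hc.symm.trans hv0), hu ▸ hq⟩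
  intro v
  obtain ⟨c1, c2, c3, c4⟩ := hf v
  refine ⟨?_, ?_, ?_, ?_⟩
  · intro h
    obtain ⟨u, ha, hq⟩ := c1 h
    exact conv v u (fun w => f w ≠ 0) ha hq
  · intro h
    obtain ⟨u, ha, hq⟩ := c2 h
    exact conv v u (fun w => f w = 0) ha hq
  · intro h
    obtain ⟨ha, hq⟩ := c3 h
    rcases pathG_adj.1 ha with ⟨_, h0⟩ | ⟨hc, _⟩
    · exact ⟨h0, hq⟩
    · exact absurd (by linear_combination -hc) (two_ne' (n := n))
  · intro h
    obtain ⟨ha, hq⟩ := c4 h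
    rcases pathG_adj.1 ha with ⟨hc, _⟩ | ⟨_, h0⟩
    · exact absurd (by linear_combination -hc) (two_ne' (n := n))
    · refine ⟨fun hv0 => h0 ?_, hq⟩
      rw [sub_add_cancel, hv0]

theorem derivedCycle {n : ℕ} {f : Fin (n+3) → Fin 3} (hf : FCond (cycleGraph (n+3)) f) :
    ∀ v : Fin (n+3),
      (f v = 0 → f (v+1) ≠ 0 ∨ f (v-1) ≠ 0) ∧
      (f v ≠ 0 → f (v+1) = 0 ∨ f (v-1) = 0) ∧
      (f v = 1 → f (v+1) = 2) ∧
      (f v = 2 → f (v-1) = 1) := by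
  have conv : ∀ (v u : Fin (n+3)) (Q : Fin (n+3) → Prop), (cycleGraph (n+3)).Adj v u → Q u →
      Q (v+1) ∨ Q (v-1) := by
    intro v u Q ha hq
    rcases cyc_adj.1 ha with hc | hc
    · exact Or.inl (hc ▸ hq)
    · exact Or.inr ((eq_sub_of_add_eq hc.symm) ▸ hq)
  intro v
  obtain ⟨c1, c2, c3, c4⟩ := hf v
  exact ⟨fun h => by obtain ⟨u, ha, hq⟩ := c1 h; exact conv v u (fun w => f w ≠ 0) ha hq,
         fun h => by obtain ⟨u, ha, hq⟩ := c2 h; exact conv v u (fun w => f w = 0) ha hq,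
         fun h => (c3 h).2, fun h => (c4 h).2⟩

set_option synthInstance.maxSize 100000
set_option synthInstance.maxHeartbeats 4000000
set_option maxHeartbeats 10000000
theorem keyP3 : ∀ x0 x1 x2 : Fin 3,
    ((x0 = 0 → ((0:Fin 3) + 1 ≠ 0 ∧ x1 ≠ 0) ∨ ((0:Fin 3) ≠ 0 ∧ x2 ≠ 0)) ∧ (x0 ≠ 0 → ((0:Fin 3) + 1 ≠ 0 ∧ x1 = 0) ∨ ((0:Fin 3) ≠ 0 ∧ x2 = 0)) ∧ (x0 = 1 → (0:Fin 3) + 1 ≠ 0 ∧ x1 = 2) ∧ (x0 = 2 → (0:Fin 3) ≠ 0 ∧ x2 = 1)) →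
    ((x1 = 0 → ((1:Fin 3) + 1 ≠ 0 ∧ x2 ≠ 0) ∨ ((1:Fin 3) ≠ 0 ∧ x0 ≠ 0)) ∧ (x1 ≠ 0 → ((1:Fin 3) + 1 ≠ 0 ∧ x2 = 0) ∨ ((1:Fin 3) ≠ 0 ∧ x0 = 0)) ∧ (x1 = 1 → (1:Fin 3) + 1 ≠ 0 ∧ x2 = 2) ∧ (x1 = 2 → (1:Fin 3) ≠ 0 ∧ x0 = 1)) →
    ((x2 = 0 → ((2:Fin 3) + 1 ≠ 0 ∧ x0 ≠ 0) ∨ ((2:Fin 3) ≠ 0 ∧ x1 ≠ 0)) ∧ (x2 ≠ 0 → ((2:Fin 3) + 1 ≠ 0 ∧ x0 = 0) ∨ ((2:Fin 3) ≠ 0 ∧ x1 = 0)) ∧ (x2 = 1 → (2:Fin 3) + 1 ≠ 0 ∧ x0 = 2) ∧ (x2 = 2 → (2:Fin 3) ≠ 0 ∧ x1 = 1)) → False := by decide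
theorem keyP6 : ∀ x0 x1 x2 x3 x4 x5 : Fin 3,
    ((x0 = 0 → ((0:Fin 6) + 1 ≠ 0 ∧ x1 ≠ 0) ∨ ((0:Fin 6) ≠ 0 ∧ x5 ≠ 0)) ∧ (x0 ≠ 0 → ((0:Fin 6) + 1 ≠ 0 ∧ x1 = 0) ∨ ((0:Fin 6) ≠ 0 ∧ x5 = 0)) ∧ (x0 = 1 → (0:Fin 6) + 1 ≠ 0 ∧ x1 = 2) ∧ (x0 = 2 → (0:Fin 6) ≠ 0 ∧ x5 = 1)) →
    ((x1 = 0 → ((1:Fin 6) + 1 ≠ 0 ∧ x2 ≠ 0) ∨ ((1:Fin 6) ≠ 0 ∧ x0 ≠ 0)) ∧ (x1 ≠ 0 → ((1:Fin 6) + 1 ≠ 0 ∧ x2 = 0) ∨ ((1:Fin 6) ≠ 0 ∧ x0 = 0)) ∧ (x1 = 1 → (1:Fin 6) + 1 ≠ 0 ∧ x2 = 2) ∧ (x1 = 2 → (1:Fin 6) ≠ 0 ∧ x0 = 1)) →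
    ((x2 = 0 → ((2:Fin 6) + 1 ≠ 0 ∧ x3 ≠ 0) ∨ ((2:Fin 6) ≠ 0 ∧ x1 ≠ 0)) ∧ (x2 ≠ 0 → ((2:Fin 6) + 1 ≠ 0 ∧ x3 = 0) ∨ ((2:Fin 6) ≠ 0 ∧ x1 = 0)) ∧ (x2 = 1 → (2:Fin 6) + 1 ≠ 0 ∧ x3 = 2) ∧ (x2 = 2 → (2:Fin 6) ≠ 0 ∧ x1 = 1)) →
    ((x3 = 0 → ((3:Fin 6) + 1 ≠ 0 ∧ x4 ≠ 0) ∨ ((3:Fin 6) ≠ 0 ∧ x2 ≠ 0)) ∧ (x3 ≠ 0 → ((3:Fin 6) + 1 ≠ 0 ∧ x4 = 0) ∨ ((3:Fin 6) ≠ 0 ∧ x2 = 0)) ∧ (x3 = 1 → (3:Fin 6) + 1 ≠ 0 ∧ x4 = 2) ∧ (x3 = 2 → (3:Fin 6) ≠ 0 ∧ x2 = 1)) →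
    ((x4 = 0 → ((4:Fin 6) + 1 ≠ 0 ∧ x5 ≠ 0) ∨ ((4:Fin 6) ≠ 0 ∧ x3 ≠ 0)) ∧ (x4 ≠ 0 → ((4:Fin 6) + 1 ≠ 0 ∧ x5 = 0) ∨ ((4:Fin 6) ≠ 0 ∧ x3 = 0)) ∧ (x4 = 1 → (4:Fin 6) + 1 ≠ 0 ∧ x5 = 2) ∧ (x4 = 2 → (4:Fin 6) ≠ 0 ∧ x3 = 1)) →
    ((x5 = 0 → ((5:Fin 6) + 1 ≠ 0 ∧ x0 ≠ 0) ∨ ((5:Fin 6) ≠ 0 ∧ x4 ≠ 0)) ∧ (x5 ≠ 0 → ((5:Fin 6) + 1 ≠ 0 ∧ x0 = 0) ∨ ((5:Fin 6) ≠ 0 ∧ x4 = 0)) ∧ (x5 = 1 → (5:Fin 6) + 1 ≠ 0 ∧ x0 = 2) ∧ (x5 = 2 → (5:Fin 6) ≠ 0 ∧ x4 = 1)) → False := by decide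
theorem keyC5 : ∀ x0 x1 x2 x3 x4 : Fin 3,
    ((x0 = 0 → x1 ≠ 0 ∨ x4 ≠ 0) ∧ (x0 ≠ 0 → x1 = 0 ∨ x4 = 0) ∧ (x0 = 1 → x1 = 2) ∧ (x0 = 2 → x4 = 1)) →
    ((x1 = 0 → x2 ≠ 0 ∨ x0 ≠ 0) ∧ (x1 ≠ 0 → x2 = 0 ∨ x0 = 0) ∧ (x1 = 1 → x2 = 2) ∧ (x1 = 2 → x0 = 1)) →
    ((x2 = 0 → x3 ≠ 0 ∨ x1 ≠ 0) ∧ (x2 ≠ 0 → x3 = 0 ∨ x1 = 0) ∧ (x2 = 1 → x3 = 2) ∧ (x2 = 2 → x1 = 1)) →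
    ((x3 = 0 → x4 ≠ 0 ∨ x2 ≠ 0) ∧ (x3 ≠ 0 → x4 = 0 ∨ x2 = 0) ∧ (x3 = 1 → x4 = 2) ∧ (x3 = 2 → x2 = 1)) →
    ((x4 = 0 → x0 ≠ 0 ∨ x3 ≠ 0) ∧ (x4 ≠ 0 → x0 = 0 ∨ x3 = 0) ∧ (x4 = 1 → x0 = 2) ∧ (x4 = 2 → x3 = 1)) → False := by decide
theorem keyP9 : ∀ x0 x1 x2 x3 x4 x5 x6 x7 x8 : Fin 3,
    ((x0 = 0 → ((0:Fin 9) + 1 ≠ 0 ∧ x1 ≠ 0) ∨ ((0:Fin 9) ≠ 0 ∧ x8 ≠ 0)) ∧ (x0 ≠ 0 → ((0:Fin 9) + 1 ≠ 0 ∧ x1 = 0) ∨ ((0:Fin 9) ≠ 0 ∧ x8 = 0)) ∧ (x0 = 1 → (0:Fin 9) + 1 ≠ 0 ∧ x1 = 2) ∧ (x0 = 2 → (0:Fin 9) ≠ 0 ∧ x8 = 1)) →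
    ((x1 = 0 → ((1:Fin 9) + 1 ≠ 0 ∧ x2 ≠ 0) ∨ ((1:Fin 9) ≠ 0 ∧ x0 ≠ 0)) ∧ (x1 ≠ 0 → ((1:Fin 9) + 1 ≠ 0 ∧ x2 = 0) ∨ ((1:Fin 9) ≠ 0 ∧ x0 = 0)) ∧ (x1 = 1 → (1:Fin 9) + 1 ≠ 0 ∧ x2 = 2) ∧ (x1 = 2 → (1:Fin 9) ≠ 0 ∧ x0 = 1)) →
    ((x2 = 0 → ((2:Fin 9) + 1 ≠ 0 ∧ x3 ≠ 0) ∨ ((2:Fin 9) ≠ 0 ∧ x1 ≠ 0)) ∧ (x2 ≠ 0 → ((2:Fin 9) + 1 ≠ 0 ∧ x3 = 0) ∨ ((2:Fin 9) ≠ 0 ∧ x1 = 0)) ∧ (x2 = 1 → (2:Fin 9) + 1 ≠ 0 ∧ x3 = 2) ∧ (x2 = 2 → (2:Fin 9) ≠ 0 ∧ x1 = 1)) →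
    ((x3 = 0 → ((3:Fin 9) + 1 ≠ 0 ∧ x4 ≠ 0) ∨ ((3:Fin 9) ≠ 0 ∧ x2 ≠ 0)) ∧ (x3 ≠ 0 → ((3:Fin 9) + 1 ≠ 0 ∧ x4 = 0) ∨ ((3:Fin 9) ≠ 0 ∧ x2 = 0)) ∧ (x3 = 1 → (3:Fin 9) + 1 ≠ 0 ∧ x4 = 2) ∧ (x3 = 2 → (3:Fin 9) ≠ 0 ∧ x2 = 1)) →
    ((x4 = 0 → ((4:Fin 9) + 1 ≠ 0 ∧ x5 ≠ 0) ∨ ((4:Fin 9) ≠ 0 ∧ x3 ≠ 0)) ∧ (x4 ≠ 0 → ((4:Fin 9) + 1 ≠ 0 ∧ x5 = 0) ∨ ((4:Fin 9) ≠ 0 ∧ x3 = 0)) ∧ (x4 = 1 → (4:Fin 9) + 1 ≠ 0 ∧ x5 = 2) ∧ (x4 = 2 → (4:Fin 9) ≠ 0 ∧ x3 = 1)) →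
    ((x5 = 0 → ((5:Fin 9) + 1 ≠ 0 ∧ x6 ≠ 0) ∨ ((5:Fin 9) ≠ 0 ∧ x4 ≠ 0)) ∧ (x5 ≠ 0 → ((5:Fin 9) + 1 ≠ 0 ∧ x6 = 0) ∨ ((5:Fin 9) ≠ 0 ∧ x4 = 0)) ∧ (x5 = 1 → (5:Fin 9) + 1 ≠ 0 ∧ x6 = 2) ∧ (x5 = 2 → (5:Fin 9) ≠ 0 ∧ x4 = 1)) →
    ((x6 = 0 → ((6:Fin 9) + 1 ≠ 0 ∧ x7 ≠ 0) ∨ ((6:Fin 9) ≠ 0 ∧ x5 ≠ 0)) ∧ (x6 ≠ 0 → ((6:Fin 9) + 1 ≠ 0 ∧ x7 = 0) ∨ ((6:Fin 9) ≠ 0 ∧ x5 = 0)) ∧ (x6 = 1 → (6:Fin 9) + 1 ≠ 0 ∧ x7 = 2) ∧ (x6 = 2 → (6:Fin 9) ≠ 0 ∧ x5 = 1)) →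
    ((x7 = 0 → ((7:Fin 9) + 1 ≠ 0 ∧ x8 ≠ 0) ∨ ((7:Fin 9) ≠ 0 ∧ x6 ≠ 0)) ∧ (x7 ≠ 0 → ((7:Fin 9) + 1 ≠ 0 ∧ x8 = 0) ∨ ((7:Fin 9) ≠ 0 ∧ x6 = 0)) ∧ (x7 = 1 → (7:Fin 9) + 1 ≠ 0 ∧ x8 = 2) ∧ (x7 = 2 → (7:Fin 9) ≠ 0 ∧ x6 = 1)) →
    ((x8 = 0 → ((8:Fin 9) + 1 ≠ 0 ∧ x0 ≠ 0) ∨ ((8:Fin 9) ≠ 0 ∧ x7 ≠ 0)) ∧ (x8 ≠ 0 → ((8:Fin 9) + 1 ≠ 0 ∧ x0 = 0) ∨ ((8:Fin 9) ≠ 0 ∧ x7 = 0)) ∧ (x8 = 1 → (8:Fin 9) + 1 ≠ 0 ∧ x0 = 2) ∧ (x8 = 2 → (8:Fin 9) ≠ 0 ∧ x7 = 1)) → False := by decide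
theorem notP3 : ¬ IsDPDP (pathG 0) := by
  intro h
  obtain ⟨f, hf⟩ := encode pathG_le h
  have d := derivedPath hf
  exact keyP3 (f 0) (f 1) (f 2) (d 0) (d 1) (d 2)

theorem notP6 : ¬ IsDPDP (pathG 3) := by
  intro h
  obtain ⟨f, hf⟩ := encode pathG_le h
  have d := derivedPath hf
  exact keyP6 (f 0) (f 1) (f 2) (f 3) (f 4) (f 5) (d 0) (d 1) (d 2) (d 3) (d 4) (d 5)

theorem notP9 : ¬ IsDPDP (pathG 6) := by
  intro h
  obtain ⟨f, hf⟩ := encode pathG_le h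
  have d := derivedPath hf
  exact keyP9 (f 0) (f 1) (f 2) (f 3) (f 4) (f 5) (f 6) (f 7) (f 8)
    (d 0) (d 1) (d 2) (d 3) (d 4) (d 5) (d 6) (d 7) (d 8)

theorem notC5 : ¬ IsDPDP (cycleGraph 5) := by
  intro h
  obtain ⟨f, hf⟩ := encode (n := 2) le_rfl h
  have d := derivedCycle hf
  exact keyC5 (f 0) (f 1) (f 2) (f 3) (f 4) (d 0) (d 1) (d 2) (d 3) (d 4)

theorem val_succ {n : ℕ} {v : Fin (n+3)} (h : v.val + 1 < n + 3) : (v+1).val = v.val + 1 := by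
  rw [Fin.val_add, Fin.val_one, Nat.mod_eq_of_lt h]

theorem val_pred {n : ℕ} {v : Fin (n+3)} (h : 1 ≤ v.val) : (v-1).val = v.val - 1 := by
  rw [Fin.sub_def]
  simp only [Fin.val_one]
  have h2 : n + 3 - 1 + v.val = (v.val - 1) + (n+3) := by omega
  have h3 : v.val - 1 < n + 3 := by omega
  rw [h2, Nat.add_mod_right, Nat.mod_eq_of_lt h3]

theorem val_succ_last {n : ℕ} {v : Fin (n+3)} (h : v.val = n + 2) : (v+1).val = 0 := by
  rw [Fin.val_add, Fin.val_one, h, show n+2+1 = n+3 from rfl, Nat.mod_self]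

def pat (i : ℕ) : Fin 3 := if i % 3 = 0 then 0 else if i % 3 = 1 then 1 else 2
def tpat (k : ℕ) : Fin 3 := if k % 4 = 1 then 1 else if k % 4 = 2 then 2 else 0

theorem pat_iff (i : ℕ) : (pat i = 0 ↔ i % 3 = 0) ∧ (pat i = 1 ↔ i % 3 = 1) ∧ (pat i = 2 ↔ i % 3 = 2) := by
  unfold pat
  split_ifs with h1 h2 <;> refine ⟨?_, ?_, ?_⟩ <;>
    constructor <;> intro hh <;> first | omega | rfl | exact absurd hh (by decide) | omega

theorem tpat_iff (k : ℕ) : (tpat k = 0 ↔ (k % 4 = 0 ∨ k % 4 = 3)) ∧ (tpat k = 1 ↔ k % 4 = 1) ∧ (tpat k = 2 ↔ k % 4 = 2) := by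
  unfold tpat
  split_ifs with h1 h2 <;> refine ⟨?_, ?_, ?_⟩ <;>
    constructor <;> intro hh <;> first | omega | rfl | exact absurd hh (by decide) | omega

theorem fin_eq_succ {n : ℕ} {a b : Fin (n+3)} (h : a.val + 1 = b.val) : b = a + 1 := by
  have hl : a.val + 1 < n + 3 := h ▸ b.isLt
  exact Fin.ext (by rw [val_succ hl, h])

theorem adjC_succ {n : ℕ} {a b : Fin (n+3)} (h : a.val + 1 = b.val) :
    (cycleGraph (n+3)).Adj a b := cyc_adj.2 (Or.inl (fin_eq_succ h))

theorem adjC_any_succ {n : ℕ} (v : Fin (n+3)) : (cycleGraph (n+3)).Adj v (v+1) :=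
  cyc_adj.2 (Or.inl rfl)

theorem adjC_any_pred {n : ℕ} (v : Fin (n+3)) : (cycleGraph (n+3)).Adj v (v-1) :=
  cyc_adj.2 (Or.inr (by rw [sub_add_cancel]))

theorem adjP_succ {n : ℕ} {v : Fin (n+3)} (h : v.val + 1 < n + 3) :
    (pathG n).Adj v (v+1) := by
  refine pathG_adj.2 (Or.inl ⟨rfl, fun hc => ?_⟩)
  have := congrArg Fin.val hc
  rw [val_succ h, Fin.val_zero] at this
  omega

theorem adjP_pred {n : ℕ} {v : Fin (n+3)} (h : 1 ≤ v.val) :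
    (pathG n).Adj v (v-1) := by
  refine pathG_adj.2 (Or.inr ⟨(sub_add_cancel v 1).symm, fun hc => ?_⟩)
  rw [sub_add_cancel] at hc
  rw [hc, Fin.val_zero] at h
  omega

theorem cycle_dpdp {n : ℕ} (h3 : (n + 3) % 3 = 0) : IsDPDP (cycleGraph (n+3)) := by
  apply decode (f := fun v => pat v.val)
  intro v
  dsimp only
  have hvN : v.val < n + 3 := v.isLt
  refine ⟨?_, ?_, ?_, ?_⟩
  · intro h
    have hr : v.val % 3 = 0 := (pat_iff _).1.1 h
    have hne : v.val + 1 < n + 3 := by omega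
    refine ⟨v + 1, adjC_any_succ v, ?_⟩
    rw [val_succ hne]
    intro hc
    have := (pat_iff _).1.1 hc
    omega
  · intro h
    have hr : v.val % 3 = 1 ∨ v.val % 3 = 2 := by
      have h0 : v.val % 3 = 0 ∨ v.val % 3 = 1 ∨ v.val % 3 = 2 := by omega
      rcases h0 with h0 | h0 | h0
      · exact absurd ((pat_iff _).1.2 h0) h
      · exact Or.inl h0
      · exact Or.inr h0
    rcases hr with hr | hr
    · refine ⟨v - 1, adjC_any_pred v, ?_⟩
      rw [val_pred (by omega)]
      exact (pat_iff _).1.2 (by omega)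
    · refine ⟨v + 1, adjC_any_succ v, ?_⟩
      by_cases hl : v.val = n + 2
      · rw [val_succ_last hl]
        exact (pat_iff _).1.2 (by omega)
      · rw [val_succ (by omega)]
        exact (pat_iff _).1.2 (by omega)
  · intro h
    have hr : v.val % 3 = 1 := (pat_iff _).2.1.1 h
    have hl : v.val + 1 < n + 3 := by omega
    refine ⟨adjC_any_succ v, ?_⟩
    rw [val_succ hl]
    exact (pat_iff _).2.2.2 (by omega)
  · intro h
    have hr : v.val % 3 = 2 := (pat_iff _).2.2.1 h
    refine ⟨adjC_any_pred v, ?_⟩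
    rw [val_pred (by omega)]
    exact (pat_iff _).2.1.2 (by omega)

theorem path_dpdp {n c j : ℕ} (hN : n + 3 = c + 4*j) (hc3 : c % 3 = 1) (hc4 : 4 ≤ c) :
    IsDPDP (pathG n) := by
  apply decode (f := fun v => if v.val < c then pat v.val else tpat (v.val - c))
  intro v
  dsimp only
  have hvN : v.val < n + 3 := v.isLt
  refine ⟨?_, ?_, ?_, ?_⟩
  · intro h
    by_cases hvc : v.val < c
    · rw [if_pos hvc] at h
      have hr : v.val % 3 = 0 := (pat_iff _).1.1 h
      by_cases hlast : v.val + 1 = c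
      · refine ⟨v - 1, adjP_pred (by omega), ?_⟩
        rw [val_pred (by omega), if_pos (by omega)]
        intro hc
        have := (pat_iff _).1.1 hc
        omega
      · refine ⟨v + 1, adjP_succ (by omega), ?_⟩
        rw [val_succ (by omega), if_pos (by omega)]
        intro hc
        have := (pat_iff _).1.1 hc
        omega
    · rw [if_neg hvc] at h
      have hr : (v.val - c) % 4 = 0 ∨ (v.val - c) % 4 = 3 := (tpat_iff _).1.1 h
      rcases hr with hr | hr
      · refine ⟨v + 1, adjP_succ (by omega), ?_⟩
        rw [val_succ (by omega), if_neg (by omega)]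
        intro hc
        rcases (tpat_iff _).1.1 hc with h0 | h0 <;> omega
      · refine ⟨v - 1, adjP_pred (by omega), ?_⟩
        rw [val_pred (by omega), if_neg (by omega)]
        intro hc
        rcases (tpat_iff _).1.1 hc with h0 | h0 <;> omega
  · intro h
    by_cases hvc : v.val < c
    · rw [if_pos hvc] at h
      have hr : v.val % 3 = 1 ∨ v.val % 3 = 2 := by
        have h0 : v.val % 3 = 0 ∨ v.val % 3 = 1 ∨ v.val % 3 = 2 := by omega
        rcases h0 with h0 | h0 | h0
        · exact absurd ((pat_iff _).1.2 h0) h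
        · exact Or.inl h0
        · exact Or.inr h0
      rcases hr with hr | hr
      · refine ⟨v - 1, adjP_pred (by omega), ?_⟩
        rw [val_pred (by omega), if_pos (by omega)]
        exact (pat_iff _).1.2 (by omega)
      · refine ⟨v + 1, adjP_succ (by omega), ?_⟩
        rw [val_succ (by omega), if_pos (by omega)]
        exact (pat_iff _).1.2 (by omega)
    · rw [if_neg hvc] at h
      have hr : (v.val - c) % 4 = 1 ∨ (v.val - c) % 4 = 2 := by
        have h0 : (v.val - c) % 4 = 0 ∨ (v.val - c) % 4 = 1 ∨ (v.val - c) % 4 = 2 ∨ (v.val - c) % 4 = 3 := by omega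
        rcases h0 with h0 | h0 | h0 | h0
        · exact absurd ((tpat_iff _).1.2 (Or.inl h0)) h
        · exact Or.inl h0
        · exact Or.inr h0
        · exact absurd ((tpat_iff _).1.2 (Or.inr h0)) h
      rcases hr with hr | hr
      · refine ⟨v - 1, adjP_pred (by omega), ?_⟩
        by_cases hk : v.val = c
        · rw [val_pred (by omega), if_neg (by omega)]
          exact (tpat_iff _).1.2 (Or.inl (by omega))
        · rw [val_pred (by omega), if_neg (by omega)]
          exact (tpat_iff _).1.2 (Or.inl (by omega))
      · refine ⟨v + 1, adjP_succ (by omega), ?_⟩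
        rw [val_succ (by omega), if_neg (by omega)]
        exact (tpat_iff _).1.2 (Or.inr (by omega))
  · intro h
    by_cases hvc : v.val < c
    · rw [if_pos hvc] at h
      have hr : v.val % 3 = 1 := (pat_iff _).2.1.1 h
      refine ⟨adjP_succ (by omega), ?_⟩
      rw [val_succ (by omega), if_pos (by omega)]
      exact (pat_iff _).2.2.2 (by omega)
    · rw [if_neg hvc] at h
      have hr : (v.val - c) % 4 = 1 := (tpat_iff _).2.1.1 h
      refine ⟨adjP_succ (by omega), ?_⟩
      rw [val_succ (by omega), if_neg (by omega)]
      exact (tpat_iff _).2.2.2 (by omega)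
  · intro h
    by_cases hvc : v.val < c
    · rw [if_pos hvc] at h
      have hr : v.val % 3 = 2 := (pat_iff _).2.2.1 h
      refine ⟨adjP_pred (by omega), ?_⟩
      rw [val_pred (by omega), if_pos (by omega)]
      exact (pat_iff _).2.1.2 (by omega)
    · rw [if_neg hvc] at h
      have hr : (v.val - c) % 4 = 2 := (tpat_iff _).2.2.1 h
      refine ⟨adjP_pred (by omega), ?_⟩
      rw [val_pred (by omega), if_neg (by omega)]
      exact (tpat_iff _).2.1.2 (by omega)

theorem lt_edge {n : ℕ} {G' : SimpleGraph (Fin (n+3))} (h : G' < cycleGraph (n+3)) :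
    ∃ k : Fin (n+3), G' ≤ (cycleGraph (n+3)).deleteEdges {s(k, k+1)} := by
  have hne : ¬ ∀ a b : Fin (n+3), (cycleGraph (n+3)).Adj a b → G'.Adj a b := by
    intro hc
    exact h.ne (le_antisymm h.le (fun a b hab => hc a b hab))
  push_neg at hne
  obtain ⟨a, b, hab, hnab⟩ := hne
  have key : ∀ k : Fin (n+3), ¬ G'.Adj k (k+1) →
      G' ≤ (cycleGraph (n+3)).deleteEdges {s(k, k+1)} := by
    intro k hk x y hxy
    rw [deleteEdges_adj, Set.mem_singleton_iff]
    refine ⟨h.le hxy, fun hc => ?_⟩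
    rcases Sym2.eq_iff.1 hc with ⟨hx, hy⟩ | ⟨hx, hy⟩
    · subst hx; subst hy; exact hk hxy
    · subst hx; subst hy; exact hk hxy.symm
  rcases cyc_adj.1 hab with hc | hc
  · exact ⟨a, key a (fun hk => hnab (hc ▸ hk))⟩
  · exact ⟨b, key b (fun hk => hnab (hc ▸ hk).symm)⟩

theorem translateDel {n : ℕ} (k : Fin (n+3))
    (h : IsDPDP ((cycleGraph (n+3)).deleteEdges {s(k, k+1)})) : IsDPDP (pathG n) := by
  set t : Fin (n+3) := -1 - k with ht
  refine isDPDP_map (Equiv.addRight t) (fun a b => ?_) h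
  have e1 : ∀ x : Fin (n+3), x + t = -1 ↔ x = k :=
    fun x => ⟨fun hh => by linear_combination hh, fun hh => by rw [hh, ht]; ring⟩
  have e2 : ∀ x : Fin (n+3), x + t = 0 ↔ x = k + 1 :=
    fun x => ⟨fun hh => by linear_combination hh, fun hh => by rw [hh, ht]; ring⟩
  simp only [Equiv.coe_addRight, pathG, deleteEdges_adj, Set.mem_singleton_iff]
  constructor
  · rintro ⟨hadj, hmem⟩
    constructor
    · rcases cyc_adj.1 hadj with hc | hc
      · exact cyc_adj.2 (Or.inl (by rw [hc]; ring))
      · exact cyc_adj.2 (Or.inr (by rw [hc]; ring))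
    · intro hc
      apply hmem
      rcases Sym2.eq_iff.1 hc with ⟨hx, hy⟩ | ⟨hx, hy⟩
      · exact Sym2.eq_iff.2 (Or.inl ⟨(e1 a).1 hx, (e2 b).1 hy⟩)
      · exact Sym2.eq_iff.2 (Or.inr ⟨(e2 a).1 hx, (e1 b).1 hy⟩)
  · rintro ⟨hadj, hmem⟩
    constructor
    · rcases cyc_adj.1 hadj with hc | hc
      · exact cyc_adj.2 (Or.inl (by linear_combination hc))
      · exact cyc_adj.2 (Or.inr (by linear_combination hc))
    · intro hc
      apply hmem
      rcases Sym2.eq_iff.1 hc with ⟨hx, hy⟩ | ⟨hx, hy⟩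
      · exact Sym2.eq_iff.2 (Or.inl ⟨(e1 a).2 hx, (e2 b).2 hy⟩)
      · exact Sym2.eq_iff.2 (Or.inr ⟨(e2 a).2 hx, (e1 b).2 hy⟩)

/-- The cycle `C_n` is a minimal DPDP-graph if and only if `n ∈ {3, 6, 9}`. -/
theorem stmt12 (n : ℕ) (hn : 3 ≤ n) :
    IsMinimalDPDP (SimpleGraph.cycleGraph n) ↔ n ∈ ({3, 6, 9} : Set ℕ) := by
  obtain ⟨m, rfl⟩ : ∃ m, n = m + 3 := ⟨n - 3, by omega⟩
  constructor
  · rintro ⟨hdp, hmin⟩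
    by_contra hne
    simp only [Set.mem_insert_iff, Set.mem_singleton_iff, not_or] at hne
    obtain ⟨h3, h6, h9⟩ := hne
    by_cases h5 : m = 2
    · subst h5
      exact notC5 hdp
    · obtain ⟨c, j, hcj, hc3, hc4⟩ : ∃ c j, m + 3 = c + 4*j ∧ c % 3 = 1 ∧ 4 ≤ c := by
        refine ⟨(m+3) - 4*((m+2) % 3), (m+2) % 3, by omega, by omega, by omega⟩
      exact hmin (pathG m) pathG_lt (path_dpdp hcj hc3 hc4)
  · intro hmem
    have h3 : (m + 3) % 3 = 0 := by
      simp only [Set.mem_insert_iff, Set.mem_singleton_iff] at hmem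
      omega
    refine ⟨cycle_dpdp h3, fun G' hlt hdp => ?_⟩
    obtain ⟨k, hle⟩ := lt_edge hlt
    have hp : IsDPDP (pathG m) := translateDel k (isDPDP_mono hle hdp)
    simp only [Set.mem_insert_iff, Set.mem_singleton_iff] at hmem
    rcases hmem with h | h | h
    · have hm : m = 0 := by omega
      subst hm; exact notP3 hp
    · have hm : m = 3 := by omega
      subst hm; exact notP6 hp
    · have hm : m = 6 := by omega
      subst hm; exact notP9 hp
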